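/- If a sequent ⊢ Γ is provable in LK1, then there exists a sequent Γ' containing no occurrence of ⊥ such that ⊢ Γ' is provable in MLL1 and there is a derivation from ⋁Γ' to ⋁Γ using only the deep inference rules w↓, c↓, ≡. -/

import Mathlib

set_option linter.unusedVariables false

/-! ## First-order terms and formulas in negation normal form -/

/-- First-order terms: variables and function symbols are named by natural numbers.
(A function symbol together with the number of arguments it is applied to plays the
role of a symbol of fixed finite arity; there are countably many symbols of each arity.) -/
inductive Term : Type where
  | var : ℕ → Term
  | fn  : ℕ → List Term → Term

/-- The variable `x` occurs in the term. -/
inductive Term.HasVar : Term → ℕ → Prop where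
  | var (x : ℕ) : HasVar (.var x) x
  | fn {f : ℕ} {ts : List Term} {t : Term} {x : ℕ} :
      t ∈ ts → HasVar t x → HasVar (.fn f ts) x

/-- Simultaneous substitution on terms. -/
def Term.subst (σ : ℕ → Term) : Term → Term
  | .var x => σ x
  | .fn f ts => .fn f (ts.attach.map fun t => t.1.subst σ)
decreasing_by
  have := List.sizeOf_lt_of_mem t.2
  simp at *; omega

/-- Renaming of variables in a term. -/
def Term.rename (ρ : ℕ → ℕ) (t : Term) : Term := t.subst (fun x => .var (ρ x))

/-- Formulas in negation normal form: `pos p ts` is the atom `p(ts)` and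
`neg p ts` is the atom `p̄(ts)` built from the dual predicate symbol. -/
inductive Form : Type where
  | pos : ℕ → List Term → Form
  | neg : ℕ → List Term → Form
  | top : Form
  | bot : Form
  | and : Form → Form → Form
  | or  : Form → Form → Form
  | all : ℕ → Form → Form
  | ex  : ℕ → Form → Form

namespace Form

/-- Atoms: `⊤`, `⊥`, `p(ts)`, `p̄(ts)`. -/
def IsAtom : Form → Prop
  | pos _ _ => True
  | neg _ _ => True
  | top => True
  | bot => True
  | _ => False

/-- Negation, defined via De Morgan duality. -/
def negf : Form → Form
  | pos p ts => neg p ts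
  | neg p ts => pos p ts
  | top => bot
  | bot => top
  | and A B => or A.negf B.negf
  | or A B => and A.negf B.negf
  | all x A => ex x A.negf
  | ex x A => all x A.negf

/-- The variable `x` occurs free in the formula. -/
inductive FreeVar : Form → ℕ → Prop where
  | pos {p ts t x} : t ∈ ts → Term.HasVar t x → FreeVar (pos p ts) x
  | neg {p ts t x} : t ∈ ts → Term.HasVar t x → FreeVar (neg p ts) x
  | andl {A B x} : FreeVar A x → FreeVar (and A B) x
  | andr {A B x} : FreeVar B x → FreeVar (and A B) x
  | orl {A B x} : FreeVar A x → FreeVar (or A B) x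
  | orr {A B x} : FreeVar B x → FreeVar (or A B) x
  | all {A x y} : FreeVar A x → x ≠ y → FreeVar (all y A) x
  | ex {A x y} : FreeVar A x → x ≠ y → FreeVar (ex y A) x

/-- Substitution of the term `u` for all free occurrences of the variable `x`. -/
def subst1 (x : ℕ) (u : Term) : Form → Form
  | pos p ts => pos p (ts.map (Term.subst (fun y => if y = x then u else .var y)))
  | neg p ts => neg p (ts.map (Term.subst (fun y => if y = x then u else .var y)))
  | top => top
  | bot => bot
  | and A B => and (A.subst1 x u) (B.subst1 x u)
  | or A B => or (A.subst1 x u) (B.subst1 x u)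
  | all y A => if y = x then all y A else all y (A.subst1 x u)
  | ex y A => if y = x then ex y A else ex y (A.subst1 x u)

/-- Application of a variable renaming to a formula, renaming all occurrences
of variables (both free and bound). -/
def renameAll (ρ : ℕ → ℕ) : Form → Form
  | pos p ts => pos p (ts.map (Term.rename ρ))
  | neg p ts => neg p (ts.map (Term.rename ρ))
  | top => top
  | bot => bot
  | and A B => and (A.renameAll ρ) (B.renameAll ρ)
  | or A B => or (A.renameAll ρ) (B.renameAll ρ)
  | all y A => all (ρ y) (A.renameAll ρ)
  | ex y A => ex (ρ y) (A.renameAll ρ)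

/-- The formula contains no occurrence of `⊥`. -/
def BotFree : Form → Prop
  | bot => False
  | and A B => BotFree A ∧ BotFree B
  | or A B => BotFree A ∧ BotFree B
  | all _ A => BotFree A
  | ex _ A => BotFree A
  | _ => True

/-- Formula equivalence `≡`: the smallest congruence generated by commutativity and
associativity of `∧` and `∨`, commutation of like quantifiers, and the scope equations
`∀x.(A∨B) ≡ (∀x.A)∨B` and `∃x.(A∧B) ≡ (∃x.A)∧B` when `x` is not free in `B`. -/
inductive Equiv : Form → Form → Prop where
  | refl (A) : Equiv A A
  | symm {A B} : Equiv A B → Equiv B A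
  | trans {A B C} : Equiv A B → Equiv B C → Equiv A C
  | andCongr {A A' B B'} : Equiv A A' → Equiv B B' → Equiv (and A B) (and A' B')
  | orCongr {A A' B B'} : Equiv A A' → Equiv B B' → Equiv (or A B) (or A' B')
  | allCongr {A A'} (x) : Equiv A A' → Equiv (all x A) (all x A')
  | exCongr {A A'} (x) : Equiv A A' → Equiv (ex x A) (ex x A')
  | andComm (A B) : Equiv (and A B) (and B A)
  | orComm (A B) : Equiv (or A B) (or B A)
  | andAssoc (A B C) : Equiv (and (and A B) C) (and A (and B C))
  | orAssoc (A B C) : Equiv (or (or A B) C) (or A (or B C))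
  | allSwap (x y A) : Equiv (all x (all y A)) (all y (all x A))
  | exSwap (x y A) : Equiv (ex x (ex y A)) (ex y (ex x A))
  | allOr (x A B) (h : ¬ FreeVar B x) : Equiv (all x (or A B)) (or (all x A) B)
  | exAnd (x A B) (h : ¬ FreeVar B x) : Equiv (ex x (and A B)) (and (ex x A) B)

/-- The list of binding occurrences of variables in a formula. -/
def bvList : Form → List ℕ
  | and A B => A.bvList ++ B.bvList
  | or A B => A.bvList ++ B.bvList
  | all x A => x :: A.bvList
  | ex x A => x :: A.bvList
  | _ => []

/-- A formula is rectified if all bound variables are distinct from one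
another and from all free variables. -/
def Rectified (A : Form) : Prop :=
  A.bvList.Nodup ∧ ∀ x ∈ A.bvList, ¬ A.FreeVar x

/-- The variable `x` occurs (free or bound) in the formula. -/
def VarOccurs (A : Form) (x : ℕ) : Prop := A.FreeVar x ∨ x ∈ A.bvList

/-- The disjunction `⋁Γ` of the formulas of a sequent (written as a list);
by convention the empty disjunction is `⊥`. -/
def bigOr : List Form → Form
  | [] => bot
  | [A] => A
  | A :: B :: Γ => or A (bigOr (B :: Γ))

end Form

/-- α-conversion: renaming of bound variables. -/
inductive Alpha : Form → Form → Prop where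
  | refl (A) : Alpha A A
  | symm {A B} : Alpha A B → Alpha B A
  | trans {A B C} : Alpha A B → Alpha B C → Alpha A C
  | andCongr {A A' B B'} : Alpha A A' → Alpha B B' → Alpha (.and A B) (.and A' B')
  | orCongr {A A' B B'} : Alpha A A' → Alpha B B' → Alpha (.or A B) (.or A' B')
  | allCongr {A A'} (x) : Alpha A A' → Alpha (.all x A) (.all x A')
  | exCongr {A A'} (x) : Alpha A A' → Alpha (.ex x A) (.ex x A')
  | allRen (x y A) (h : ¬ A.VarOccurs y) :
      Alpha (.all x A) (.all y (A.subst1 x (.var y)))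
  | exRen (x y A) (h : ¬ A.VarOccurs y) :
      Alpha (.ex x A) (.ex y (A.subst1 x (.var y)))

/-- `B` is a rectification of `A`: a rectified form of `A` obtained by renaming
bound variables. -/
def IsRectification (B A : Form) : Prop := Alpha A B ∧ B.Rectified

/-! ## Deep inference -/

/-- A (positive) context: a formula with exactly one hole in atom position. -/
inductive Ctx : Type where
  | hole : Ctx
  | andL : Ctx → Form → Ctx
  | andR : Form → Ctx → Ctx
  | orL  : Ctx → Form → Ctx
  | orR  : Form → Ctx → Ctx
  | all  : ℕ → Ctx → Ctx
  | ex   : ℕ → Ctx → Ctx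

/-- `S.fill A` replaces the hole of `S` by `A`. -/
def Ctx.fill : Ctx → Form → Form
  | .hole, A => A
  | .andL S B, A => .and (S.fill A) B
  | .andR B S, A => .and B (S.fill A)
  | .orL S B, A => .or (S.fill A) B
  | .orR B S, A => .or B (S.fill A)
  | .all x S, A => .all x (S.fill A)
  | .ex x S, A => .ex x (S.fill A)

/-- The names of the deep inference rules. -/
inductive RuleName : Type where
  | allTop   -- ∀⊤
  | aiDown   -- ai↓
  | tDown    -- t↓
  | s        -- switch
  | mix      -- mix
  | exR      -- ∃
  | equivR   -- ≡
  | wDown    -- w↓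
  | m        -- medial
  | acDown   -- ac↓
  | mAll     -- m∀
  | mEx      -- m∃
  | wAll     -- w∀
  | cAll     -- c∀
  | cDown    -- general contraction c↓
  deriving DecidableEq

/-- Shallow instances of the deep inference rules: `Shallow r P Q` means that the
rule `r` rewrites the premise `P` into the conclusion `Q` (with the empty context). -/
inductive Shallow : RuleName → Form → Form → Prop where
  | allTop (x : ℕ) : Shallow .allTop .top (.all x .top)
  | aiDown (a : Form) (h : a.IsAtom) : Shallow .aiDown .top (.or a a.negf)
  | tDown (A : Form) : Shallow .tDown A (.and A .top)
  | s (A B C : Form) : Shallow .s (.and A (.or B C)) (.or (.and A B) C)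
  | mix (A B : Form) : Shallow .mix (.and A B) (.or A B)
  | exR (x : ℕ) (t : Term) (A : Form) : Shallow .exR (A.subst1 x t) (.ex x A)
  | equivR {A B : Form} (h : Form.Equiv A B) : Shallow .equivR B A
  | wDown (A B : Form) : Shallow .wDown A (.or A B)
  | m (A B C D : Form) :
      Shallow .m (.or (.and A C) (.and B D)) (.and (.or A B) (.or C D))
  | acDown (a : Form) (h : a.IsAtom) : Shallow .acDown (.or a a) a
  | mAll (x : ℕ) (A B : Form) :
      Shallow .mAll (.or (.all x A) (.all x B)) (.all x (.or A B))
  | mEx (x : ℕ) (A B : Form) :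
      Shallow .mEx (.or (.ex x A) (.ex x B)) (.ex x (.or A B))
  | wAll (x : ℕ) (A : Form) (h : ¬ A.FreeVar x) : Shallow .wAll A (.all x A)
  | cAll (x : ℕ) (A : Form) : Shallow .cAll (.all x (.all x A)) (.all x A)
  | cDown (A : Form) : Shallow .cDown (.or A A) A

/-- One deep inference step using a rule from `R`, applied inside a context. -/
def Step (R : Set RuleName) (A B : Form) : Prop :=
  ∃ r ∈ R, ∃ (S : Ctx) (P Q : Form), Shallow r P Q ∧ A = S.fill P ∧ B = S.fill Q

/-- `Deriv R A B`: there is a derivation from `A` to `B` using only rules from `R`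
(a finite sequence of deep inference steps rewriting `A` into `B`). -/
def Deriv (R : Set RuleName) : Form → Form → Prop :=
  Relation.ReflTransGen (Step R)

/-- A formula is provable in a system if there is a derivation from `⊤` to it. -/
def Provable (R : Set RuleName) (A : Form) : Prop := Deriv R .top A

/-- The linear system `MLS1X`. -/
def MLS1X : Set RuleName :=
  {RuleName.allTop, RuleName.aiDown, RuleName.tDown, RuleName.s, RuleName.mix,
   RuleName.exR, RuleName.equivR}

/-- The system `KS1`. -/
def KS1 : Set RuleName :=
  {RuleName.allTop, RuleName.aiDown, RuleName.tDown, RuleName.s, RuleName.mix,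
   RuleName.exR, RuleName.equivR, RuleName.wDown, RuleName.m, RuleName.acDown,
   RuleName.mAll, RuleName.mEx, RuleName.wAll, RuleName.cAll}

/-! ## The sequent calculi LK1 and MLL1 -/

/-- One-sided sequent calculus on multisets of formulas. `SC true` is full `LK1`;
`SC false` is its linear fragment `MLL1` (no contraction and no weakening). -/
inductive SC : Bool → Multiset Form → Prop where
  | ax (full : Bool) (a : Form) (h : a.IsAtom) : SC full {a, a.negf}
  | top (full : Bool) : SC full {Form.top}
  | bot (full : Bool) {Γ : Multiset Form} : SC full Γ → SC full (Form.bot ::ₘ Γ)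
  | orR (full : Bool) {Γ : Multiset Form} {A B : Form} :
      SC full (A ::ₘ B ::ₘ Γ) → SC full (Form.or A B ::ₘ Γ)
  | andR (full : Bool) {Γ Δ : Multiset Form} {A B : Form} :
      SC full (A ::ₘ Γ) → SC full (B ::ₘ Δ) → SC full (Form.and A B ::ₘ (Γ + Δ))
  | mix (full : Bool) {Γ Δ : Multiset Form} : SC full Γ → SC full Δ → SC full (Γ + Δ)
  | exR (full : Bool) {Γ : Multiset Form} {A : Form} (x : ℕ) (t : Term) :
      SC full (A.subst1 x t ::ₘ Γ) → SC full (Form.ex x A ::ₘ Γ)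
  | allR (full : Bool) {Γ : Multiset Form} {A : Form} (x : ℕ)
      (h : ∀ B ∈ Γ, ¬ B.FreeVar x) :
      SC full (A ::ₘ Γ) → SC full (Form.all x A ::ₘ Γ)
  | ctr {Γ : Multiset Form} {A : Form} : SC true (A ::ₘ A ::ₘ Γ) → SC true (A ::ₘ Γ)
  | wk {Γ : Multiset Form} (A : Form) : SC true Γ → SC true (A ::ₘ Γ)

/-- Provability in the sequent calculus `LK1`. -/
def LK1 (Γ : Multiset Form) : Prop := SC true Γ

/-- Provability in the sequent calculus `MLL1` (first-order multiplicative
linear logic with mix). -/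
def MLL1 (Γ : Multiset Form) : Prop := SC false Γ

/-! ### Auxiliary development -/

section Decomposition

open Form

/-- The rule set `{w↓, c↓, ≡}`. -/
abbrev Wset : Set RuleName := {RuleName.wDown, RuleName.cDown, RuleName.equivR}

lemma wDown_mem : RuleName.wDown ∈ Wset := Or.inl rfl
lemma cDown_mem : RuleName.cDown ∈ Wset := Or.inr (Or.inl rfl)
lemma equivR_mem : RuleName.equivR ∈ Wset := Or.inr (Or.inr rfl)

/-- Composition of contexts. -/
def Ctx.comp : Ctx → Ctx → Ctx
  | .hole, T => T
  | .andL S B, T => .andL (S.comp T) B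
  | .andR B S, T => .andR B (S.comp T)
  | .orL S B, T => .orL (S.comp T) B
  | .orR B S, T => .orR B (S.comp T)
  | .all x S, T => .all x (S.comp T)
  | .ex x S, T => .ex x (S.comp T)

lemma Ctx.fill_comp (S T : Ctx) (A : Form) :
    (S.comp T).fill A = S.fill (T.fill A) := by
  induction S <;> simp [Ctx.comp, Ctx.fill, *]

lemma Step.ctx {R : Set RuleName} {A B : Form} (S : Ctx) (h : Step R A B) :
    Step R (S.fill A) (S.fill B) := by
  obtain ⟨r, hr, T, P, Q, hs, rfl, rfl⟩ := h
  exact ⟨r, hr, S.comp T, P, Q, hs, (Ctx.fill_comp S T P).symm, (Ctx.fill_comp S T Q).symm⟩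

lemma Deriv.ctx {R : Set RuleName} {A B : Form} (S : Ctx) (h : Deriv R A B) :
    Deriv R (S.fill A) (S.fill B) :=
  Relation.ReflTransGen.lift S.fill (fun _ _ hab => Step.ctx S hab) _ _ h

lemma step_shallow {r : RuleName} {P Q : Form} (hr : r ∈ Wset) (h : Shallow r P Q) :
    Step Wset P Q := ⟨r, hr, .hole, P, Q, h, rfl, rfl⟩

lemma deriv_shallow {r : RuleName} {P Q : Form} (hr : r ∈ Wset) (h : Shallow r P Q) :
    Deriv Wset P Q := Relation.ReflTransGen.single (step_shallow hr h)

lemma deriv_equiv {A B : Form} (h : Form.Equiv B A) : Deriv Wset A B :=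
  deriv_shallow equivR_mem (Shallow.equivR h)

/-- `Exp C A` : `A` is obtained from `C` by deep weakenings and contractions. -/
inductive Exp : Form → Form → Prop where
  | refl (A) : Exp A A
  | andCongr {C D A B} : Exp C A → Exp D B → Exp (.and C D) (.and A B)
  | orCongr {C D A B} : Exp C A → Exp D B → Exp (.or C D) (.or A B)
  | allCongr (x) {C A} : Exp C A → Exp (.all x C) (.all x A)
  | exCongr (x) {C A} : Exp C A → Exp (.ex x C) (.ex x A)
  | wkl {C A} (B) : Exp C A → Exp C (.or A B)
  | wkr {C B} (A) : Exp C B → Exp C (.or A B)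
  | ctr {C D A} : Exp C A → Exp D A → Exp (.or C D) A

lemma exp_freeVar {C A : Form} (h : Exp C A) : ∀ x, C.FreeVar x → A.FreeVar x := by
  induction h with
  | refl => exact fun _ h => h
  | andCongr _ _ ih1 ih2 =>
      intro x hx; cases hx with
      | andl h => exact FreeVar.andl (ih1 x h)
      | andr h => exact FreeVar.andr (ih2 x h)
  | orCongr _ _ ih1 ih2 =>
      intro x hx; cases hx with
      | orl h => exact FreeVar.orl (ih1 x h)
      | orr h => exact FreeVar.orr (ih2 x h)
  | allCongr y _ ih =>
      intro x hx; cases hx with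
      | all h hne => exact FreeVar.all (ih x h) hne
  | exCongr y _ ih =>
      intro x hx; cases hx with
      | ex h hne => exact FreeVar.ex (ih x h) hne
  | wkl B _ ih => exact fun x hx => FreeVar.orl (ih x hx)
  | wkr A _ ih => exact fun x hx => FreeVar.orr (ih x hx)
  | ctr _ _ ih1 ih2 =>
      intro x hx; cases hx with
      | orl h => exact ih1 x h
      | orr h => exact ih2 x h

lemma exp_deriv {C A : Form} (h : Exp C A) : Deriv Wset C A := by
  induction h with
  | refl => exact Relation.ReflTransGen.refl
  | @andCongr C D A B _ _ ih1 ih2 =>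
      exact (Deriv.ctx (.andL .hole D) ih1).trans (Deriv.ctx (.andR A .hole) ih2)
  | @orCongr C D A B _ _ ih1 ih2 =>
      exact (Deriv.ctx (.orL .hole D) ih1).trans (Deriv.ctx (.orR A .hole) ih2)
  | allCongr x _ ih => exact Deriv.ctx (.all x .hole) ih
  | exCongr x _ ih => exact Deriv.ctx (.ex x .hole) ih
  | @wkl C A B _ ih =>
      exact ih.trans (deriv_shallow wDown_mem (Shallow.wDown A B))
  | @wkr C B A _ ih =>
      exact (ih.trans (deriv_shallow wDown_mem (Shallow.wDown B A))).trans
        (deriv_equiv (Form.Equiv.orComm B A).symm)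
  | @ctr C D A _ _ ih1 ih2 =>
      exact ((Deriv.ctx (.orL .hole D) ih1).trans (Deriv.ctx (.orR A .hole) ih2)).trans
        (deriv_shallow cDown_mem (Shallow.cDown A))

lemma botFree_subst1 {x : ℕ} {t : Term} : ∀ {A : Form},
    (A.subst1 x t).BotFree ↔ A.BotFree := by
  intro A
  induction A with
  | pos p ts => simp [Form.subst1, Form.BotFree]
  | neg p ts => simp [Form.subst1, Form.BotFree]
  | top => simp [Form.subst1, Form.BotFree]
  | bot => simp [Form.subst1, Form.BotFree]
  | and A B ih1 ih2 => simp [Form.subst1, Form.BotFree, ih1, ih2]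
  | or A B ih1 ih2 => simp [Form.subst1, Form.BotFree, ih1, ih2]
  | all y A ih =>
      simp only [Form.subst1]; split <;> simp [Form.BotFree, ih]
  | ex y A ih =>
      simp only [Form.subst1]; split <;> simp [Form.BotFree, ih]

lemma subst1_eq_or {x : ℕ} {t : Term} {B₀ P Q : Form}
    (h : B₀.subst1 x t = .or P Q) :
    ∃ P₀ Q₀, B₀ = .or P₀ Q₀ ∧ P₀.subst1 x t = P ∧ Q₀.subst1 x t = Q := by
  cases B₀ <;> simp only [Form.subst1] at h
  case or A B =>
    injection h with h1 h2
    exact ⟨A, B, rfl, h1, h2⟩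
  case all z A => split at h <;> cases h
  case ex z A => split at h <;> cases h
  all_goals cases h

lemma subst1_eq_all {x : ℕ} {t : Term} {B₀ : Form} {y : ℕ} {D : Form}
    (h : B₀.subst1 x t = .all y D) :
    ∃ A₀, B₀ = .all y A₀ ∧ D = if y = x then A₀ else A₀.subst1 x t := by
  cases B₀ <;> simp only [Form.subst1] at h
  case all z A =>
    split at h
    next hzx =>
      injection h with h1 h2
      exact ⟨A, by rw [h1], by rw [← h1, if_pos hzx]; exact h2.symm⟩
    next hzx =>
      injection h with h1 h2
      exact ⟨A, by rw [h1], by rw [← h1, if_neg hzx]; exact h2.symm⟩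
  case ex z A => split at h <;> cases h
  all_goals cases h

lemma subst1_eq_ex {x : ℕ} {t : Term} {B₀ : Form} {y : ℕ} {D : Form}
    (h : B₀.subst1 x t = .ex y D) :
    ∃ A₀, B₀ = .ex y A₀ ∧ D = if y = x then A₀ else A₀.subst1 x t := by
  cases B₀ <;> simp only [Form.subst1] at h
  case ex z A =>
    split at h
    next hzx =>
      injection h with h1 h2
      exact ⟨A, by rw [h1], by rw [← h1, if_pos hzx]; exact h2.symm⟩
    next hzx =>
      injection h with h1 h2
      exact ⟨A, by rw [h1], by rw [← h1, if_neg hzx]; exact h2.symm⟩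
  case all z A => split at h <;> cases h
  all_goals cases h

lemma subst1_eq_and {x : ℕ} {t : Term} {B₀ P Q : Form}
    (h : B₀.subst1 x t = .and P Q) :
    ∃ P₀ Q₀, B₀ = .and P₀ Q₀ ∧ P₀.subst1 x t = P ∧ Q₀.subst1 x t = Q := by
  cases B₀ <;> simp only [Form.subst1] at h
  case and A B =>
    injection h with h1 h2
    exact ⟨A, B, rfl, h1, h2⟩
  case all z A => split at h <;> cases h
  case ex z A => split at h <;> cases h
  all_goals cases h

lemma exp_antisubst {x : ℕ} {t : Term} :
    ∀ {C B : Form}, Exp C B → ∀ {B₀ : Form}, B = B₀.subst1 x t →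
      ∃ C₀, C₀.subst1 x t = C ∧ Exp C₀ B₀ := by
  intro C B h
  induction h with
  | refl A => exact fun {B₀} hB => ⟨B₀, hB.symm, Exp.refl B₀⟩
  | @andCongr C D A B _ _ ih1 ih2 =>
      intro B₀ hB
      obtain ⟨P₀, Q₀, rfl, hP, hQ⟩ := subst1_eq_and hB.symm
      obtain ⟨C₀, hC₀, hE1⟩ := ih1 hP.symm
      obtain ⟨D₀, hD₀, hE2⟩ := ih2 hQ.symm
      exact ⟨.and C₀ D₀, by simp [Form.subst1, hC₀, hD₀], Exp.andCongr hE1 hE2⟩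
  | @orCongr C D A B _ _ ih1 ih2 =>
      intro B₀ hB
      obtain ⟨P₀, Q₀, rfl, hP, hQ⟩ := subst1_eq_or hB.symm
      obtain ⟨C₀, hC₀, hE1⟩ := ih1 hP.symm
      obtain ⟨D₀, hD₀, hE2⟩ := ih2 hQ.symm
      exact ⟨.or C₀ D₀, by simp [Form.subst1, hC₀, hD₀], Exp.orCongr hE1 hE2⟩
  | @allCongr y C A hCA ih =>
      intro B₀ hB
      obtain ⟨A₀, rfl, hD⟩ := subst1_eq_all hB.symm
      by_cases hyx : y = x
      · subst hyx
        refine ⟨.all y C, by simp [Form.subst1], ?_⟩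
        have hD' : A = A₀ := by simpa using hD
        exact hD' ▸ Exp.allCongr y hCA
      · simp only [if_neg hyx] at hD
        obtain ⟨C₀, hC₀, hE⟩ := ih hD
        exact ⟨.all y C₀, by simp [Form.subst1, hyx, hC₀], Exp.allCongr y hE⟩
  | @exCongr y C A hCA ih =>
      intro B₀ hB
      obtain ⟨A₀, rfl, hD⟩ := subst1_eq_ex hB.symm
      by_cases hyx : y = x
      · subst hyx
        refine ⟨.ex y C, by simp [Form.subst1], ?_⟩
        have hD' : A = A₀ := by simpa using hD
        exact hD' ▸ Exp.exCongr y hCA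
      · simp only [if_neg hyx] at hD
        obtain ⟨C₀, hC₀, hE⟩ := ih hD
        exact ⟨.ex y C₀, by simp [Form.subst1, hyx, hC₀], Exp.exCongr y hE⟩
  | @wkl C A B _ ih =>
      intro B₀ hB
      obtain ⟨P₀, Q₀, rfl, hP, hQ⟩ := subst1_eq_or hB.symm
      obtain ⟨C₀, hC₀, hE⟩ := ih hP.symm
      exact ⟨C₀, hC₀, Exp.wkl Q₀ hE⟩
  | @wkr C B A _ ih =>
      intro B₀ hB
      obtain ⟨P₀, Q₀, rfl, hP, hQ⟩ := subst1_eq_or hB.symm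
      obtain ⟨C₀, hC₀, hE⟩ := ih hQ.symm
      exact ⟨C₀, hC₀, Exp.wkr P₀ hE⟩
  | @ctr C D A _ _ ih1 ih2 =>
      intro B₀ hB
      obtain ⟨C₀, hC₀, hE1⟩ := ih1 hB
      obtain ⟨D₀, hD₀, hE2⟩ := ih2 hB
      exact ⟨.or C₀ D₀, by simp [Form.subst1, hC₀, hD₀], Exp.ctr hE1 hE2⟩

/-- `Link Γ' L` : every formula of `Γ'` expands to a distinct formula of `L`. -/
inductive Link : List Form → List Form → Prop where
  | nil : Link [] []
  | skip {G L} (A) : Link G L → Link G (A :: L)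
  | cons {G L} (C A) : C.BotFree → Exp C A → Link G L → Link (C :: G) (A :: L)

lemma link_nil : ∀ L : List Form, Link [] L
  | [] => Link.nil
  | A :: L => Link.skip A (link_nil L)

lemma link_nil_inv {G : List Form} (h : Link G []) : G = [] := by
  cases h; rfl

lemma link_append {G₁ L₁ G₂ L₂ : List Form} (h₁ : Link G₁ L₁) (h₂ : Link G₂ L₂) :
    Link (G₁ ++ G₂) (L₁ ++ L₂) := by
  induction h₁ with
  | nil => simpa using h₂
  | skip A _ ih => exact Link.skip A ih
  | cons C A hbf hexp _ ih => exact Link.cons C A hbf hexp ih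

lemma link_botFree {G L : List Form} (h : Link G L) : ∀ C ∈ G, C.BotFree := by
  induction h with
  | nil => simp
  | skip A _ ih => exact ih
  | cons C A hbf hexp _ ih =>
      intro D hD
      rcases List.mem_cons.1 hD with rfl | hD
      · exact hbf
      · exact ih D hD

lemma link_freeVar {G L : List Form} {x : ℕ} (h : Link G L)
    (hL : ∀ B ∈ L, ¬ B.FreeVar x) : ∀ C ∈ G, ¬ C.FreeVar x := by
  induction h with
  | nil => simp
  | skip A _ ih => exact ih (fun B hB => hL B (List.mem_cons_of_mem _ hB))
  | cons C A hbf hexp _ ih =>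
      intro D hD
      rcases List.mem_cons.1 hD with rfl | hD
      · exact fun hf => hL A List.mem_cons_self (exp_freeVar hexp x hf)
      · exact ih (fun B hB => hL B (List.mem_cons_of_mem _ hB)) D hD

lemma link_perm : ∀ {L L' : List Form}, L.Perm L' → ∀ {G : List Form}, Link G L →
    ∃ G', G.Perm G' ∧ Link G' L' := by
  intro L L' hp
  induction hp with
  | nil => exact fun {G} h => ⟨G, List.Perm.refl G, h⟩
  | cons A p ih =>
      intro G h
      cases h with
      | skip A h' =>
          obtain ⟨G', hG, hL⟩ := ih h'
          exact ⟨G', hG, Link.skip A hL⟩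
      | cons C A hbf hexp h' =>
          obtain ⟨G', hG, hL⟩ := ih h'
          exact ⟨C :: G', hG.cons C, Link.cons C A hbf hexp hL⟩
  | swap A B l =>
      intro G h
      cases h with
      | skip _ h1 =>
          cases h1 with
          | skip _ h2 => exact ⟨G, List.Perm.refl G, Link.skip A (Link.skip B h2)⟩
          | cons C _ hbf hexp h2 =>
              exact ⟨C :: _, List.Perm.refl _, Link.cons C A hbf hexp (Link.skip B h2)⟩
      | cons C _ hbf hexp h1 =>
          cases h1 with
          | skip _ h2 =>
              exact ⟨C :: _, List.Perm.refl _, Link.skip A (Link.cons C B hbf hexp h2)⟩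
          | cons D _ hbf2 hexp2 h2 =>
              exact ⟨D :: C :: _, List.Perm.swap D C _,
                Link.cons D A hbf2 hexp2 (Link.cons C B hbf hexp h2)⟩
  | trans p₁ p₂ ih₁ ih₂ =>
      intro G h
      obtain ⟨G₁, hG₁, hL₁⟩ := ih₁ h
      obtain ⟨G₂, hG₂, hL₂⟩ := ih₂ hL₁
      exact ⟨G₂, hG₁.trans hG₂, hL₂⟩

lemma headLink {G L : List Form} {A : Form} {Δ : Multiset Form}
    (h : Link G L) (hL : (↑L : Multiset Form) = A ::ₘ Δ) :
    ∃ (G' l : List Form), (↑G' : Multiset Form) = ↑G ∧ (↑l : Multiset Form) = Δ ∧ Link G' (A :: l) := by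
  have hA : A ∈ L := by
    have : A ∈ (↑L : Multiset Form) := hL ▸ Multiset.mem_cons_self A Δ
    exact this
  obtain ⟨s, u, rfl⟩ := List.append_of_mem hA
  have hperm : (s ++ A :: u).Perm (A :: (s ++ u)) := List.perm_middle
  obtain ⟨G', hG, hLk⟩ := link_perm hperm h
  refine ⟨G', s ++ u, ?_, ?_, hLk⟩
  · exact Multiset.coe_eq_coe.2 hG.symm
  · have h1 : (↑(s ++ A :: u) : Multiset Form) = ↑(A :: (s ++ u)) :=
      Multiset.coe_eq_coe.2 hperm
    have h2 : (A ::ₘ (↑(s ++ u) : Multiset Form)) = A ::ₘ Δ := by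
      rw [Multiset.cons_coe, ← h1, hL]
    exact (Multiset.cons_inj_right A).1 h2

lemma headLink2 {G L : List Form} {A B : Form} {Δ : Multiset Form}
    (h : Link G L) (hL : (↑L : Multiset Form) = A ::ₘ B ::ₘ Δ) :
    ∃ (G' l : List Form), (↑G' : Multiset Form) = ↑G ∧ (↑l : Multiset Form) = Δ ∧ Link G' (A :: B :: l) := by
  obtain ⟨G₁, l₁, hG₁, hl₁, hLk₁⟩ := headLink h hL
  cases hLk₁ with
  | skip _ h' =>
      obtain ⟨G', l, hG, hl, hLk⟩ := headLink h' hl₁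
      exact ⟨G', l, hG.trans hG₁, hl, Link.skip A hLk⟩
  | cons C _ hbf hexp h' =>
      obtain ⟨G', l, hG, hl, hLk⟩ := headLink h' hl₁
      refine ⟨C :: G', l, ?_, hl, Link.cons C A hbf hexp hLk⟩
      rw [← Multiset.cons_coe, hG, Multiset.cons_coe, hG₁]

lemma bigOr_cons {A : Form} {l : List Form} (h : l ≠ []) :
    Form.bigOr (A :: l) = .or A (Form.bigOr l) := by
  cases l with
  | nil => exact absurd rfl h
  | cons B l => rfl

lemma equiv_bigOr_perm : ∀ {l₁ l₂ : List Form}, l₁.Perm l₂ →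
    Form.Equiv (Form.bigOr l₁) (Form.bigOr l₂) := by
  intro l₁ l₂ hp
  induction hp with
  | nil => exact Form.Equiv.refl _
  | @cons A l l' p ih =>
      cases l with
      | nil =>
          have : l' = [] := p.symm.eq_nil
          subst this; exact Form.Equiv.refl _
      | cons B l0 =>
          have hne : l' ≠ [] := by
            intro hl; subst hl; exact absurd p.eq_nil (by simp)
          rw [bigOr_cons (by simp), bigOr_cons hne]
          exact Form.Equiv.orCongr (Form.Equiv.refl A) ih
  | @swap A B l =>
      cases l with
      | nil => exact Form.Equiv.orComm B A
      | cons C l0 =>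
          show Form.Equiv (.or B (.or A (Form.bigOr (C :: l0))))
            (.or A (.or B (Form.bigOr (C :: l0))))
          exact ((Form.Equiv.orAssoc B A _).symm.trans
            (Form.Equiv.orCongr (Form.Equiv.orComm B A) (Form.Equiv.refl _))).trans
            (Form.Equiv.orAssoc A B _)
  | trans p₁ p₂ ih₁ ih₂ => exact ih₁.trans ih₂

lemma link_deriv {G L : List Form} (h : Link G L) (hG : G ≠ []) :
    Deriv Wset (Form.bigOr G) (Form.bigOr L) := by
  induction h with
  | nil => exact absurd rfl hG
  | @skip G L A h ih =>
      have hL : L ≠ [] := fun hl => hG (link_nil_inv (hl ▸ h))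
      have d1 : Deriv Wset (Form.bigOr G) (Form.bigOr L) := ih hG
      have d2 : Deriv Wset (Form.bigOr L) (.or (Form.bigOr L) A) :=
        deriv_shallow wDown_mem (Shallow.wDown _ A)
      have d3 : Deriv Wset (.or (Form.bigOr L) A) (.or A (Form.bigOr L)) :=
        deriv_equiv (Form.Equiv.orComm A (Form.bigOr L))
      rw [bigOr_cons hL]
      exact (d1.trans d2).trans d3
  | @cons G L C A hbf hexp h ih =>
      cases G with
      | nil =>
          have dCA : Deriv Wset C A := exp_deriv hexp
          cases L with
          | nil => exact dCA
          | cons B L0 =>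
              exact dCA.trans
                (deriv_shallow wDown_mem (Shallow.wDown A (Form.bigOr (B :: L0))))
      | cons C2 G0 =>
          cases L with
          | nil => simpa using link_nil_inv h
          | cons B L0 =>
              show Deriv Wset (.or C (Form.bigOr (C2 :: G0)))
                (.or A (Form.bigOr (B :: L0)))
              have d1 : Deriv Wset (Form.or C (Form.bigOr (C2 :: G0)))
                  (Form.or C (Form.bigOr (B :: L0))) :=
                Deriv.ctx (.orR C .hole) (ih (by simp))
              have d2 : Deriv Wset (Form.or C (Form.bigOr (B :: L0)))
                  (Form.or A (Form.bigOr (B :: L0))) :=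
                Deriv.ctx (.orL .hole (Form.bigOr (B :: L0))) (exp_deriv hexp)
              exact d1.trans d2

lemma sc_ne_zero {full : Bool} {Γ : Multiset Form} (h : SC full Γ) : Γ ≠ 0 := by
  induction h with
  | ax full a ha => simp
  | top full => simp
  | bot full _ _ => simp
  | orR full _ _ => simp
  | andR full _ _ _ _ => simp
  | mix full _ _ ih1 ih2 =>
      intro h0
      have h1 := congrArg Multiset.card h0
      simp [Multiset.card_eq_zero] at h1
      exact ih1 h1.1
  | exR full x t _ _ => simp
  | allR full x hx _ _ => simp
  | ctr _ _ => simp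
  | wk A _ _ => simp


lemma coe_cons (A : Form) (l : List Form) :
    (↑(A :: l) : Multiset Form) = A ::ₘ ↑l := rfl

lemma coe_app (l₁ l₂ : List Form) :
    (↑(l₁ ++ l₂) : Multiset Form) = ↑l₁ + ↑l₂ := rfl

lemma main_decompose {full : Bool} {Δ : Multiset Form} (h : SC full Δ) :
    ∃ (G L : List Form), (↑L : Multiset Form) = Δ ∧ MLL1 ↑G ∧ Link G L := by
  induction h with
  | ax full a ha =>
      cases a with
      | pos p ts =>
          exact ⟨[.pos p ts, .neg p ts], [.pos p ts, .neg p ts], rfl,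
            SC.ax false (.pos p ts) trivial,
            Link.cons _ _ trivial (Exp.refl _)
              (Link.cons _ _ trivial (Exp.refl _) Link.nil)⟩
      | neg p ts =>
          exact ⟨[.neg p ts, .pos p ts], [.neg p ts, .pos p ts], rfl,
            SC.ax false (.neg p ts) trivial,
            Link.cons _ _ trivial (Exp.refl _)
              (Link.cons _ _ trivial (Exp.refl _) Link.nil)⟩
      | top =>
          exact ⟨[.top], [.top, .bot], rfl, SC.top false,
            Link.cons _ _ trivial (Exp.refl _) (Link.skip _ Link.nil)⟩
      | bot =>
          exact ⟨[.top], [.bot, .top], rfl, SC.top false,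
            Link.skip _ (Link.cons _ _ trivial (Exp.refl _) Link.nil)⟩
      | and A B => simp [Form.IsAtom] at ha
      | or A B => simp [Form.IsAtom] at ha
      | all x A => simp [Form.IsAtom] at ha
      | ex x A => simp [Form.IsAtom] at ha
  | top full =>
      exact ⟨[.top], [.top], rfl, SC.top false,
        Link.cons _ _ trivial (Exp.refl _) Link.nil⟩
  | bot full _ ih =>
      obtain ⟨G, L, hL, hM, hLk⟩ := ih
      exact ⟨G, .bot :: L, by rw [coe_cons, hL], hM, Link.skip _ hLk⟩
  | @orR full Γ A B _ ih =>
      obtain ⟨G, L, hL, hM, hLk⟩ := ih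
      obtain ⟨G', l, hG', hl, hLk'⟩ := headLink2 hLk hL
      have hM' : MLL1 (↑G' : Multiset Form) := by rw [hG']; exact hM
      cases hLk' with
      | skip _ h1 =>
          cases h1 with
          | skip _ h2 =>
              exact ⟨G', .or A B :: l, by rw [coe_cons, hl], hM',
                Link.skip _ h2⟩
          | cons D _ hbf hexp h2 =>
              exact ⟨D :: _, .or A B :: l, by rw [coe_cons, hl], hM',
                Link.cons D (.or A B) hbf (Exp.wkr A hexp) h2⟩
      | cons C _ hbfC hexpC h1 =>
          cases h1 with
          | skip _ h2 =>
              exact ⟨C :: _, .or A B :: l, by rw [coe_cons, hl], hM',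
                Link.cons C (.or A B) hbfC (Exp.wkl B hexpC) h2⟩
          | @cons rest _ D _ hbfD hexpD h2 =>
              refine ⟨.or C D :: rest, .or A B :: l, by rw [coe_cons, hl], ?_, ?_⟩
              · have h3 : SC false (C ::ₘ D ::ₘ (↑rest : Multiset Form)) := by
                  rw [coe_cons, coe_cons] at hM'; exact hM'
                exact SC.orR false h3
              · exact Link.cons _ _ ⟨hbfC, hbfD⟩ (Exp.orCongr hexpC hexpD) h2
  | @andR full Γ Δ' A B _ _ ih1 ih2 =>
      obtain ⟨G1, L1, hL1, hM1, hLk1⟩ := ih1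
      obtain ⟨G2, L2, hL2, hM2, hLk2⟩ := ih2
      obtain ⟨G1', l1, hG1', hl1, hLk1'⟩ := headLink hLk1 hL1
      obtain ⟨G2', l2, hG2', hl2, hLk2'⟩ := headLink hLk2 hL2
      have hM1' : MLL1 (↑G1' : Multiset Form) := by rw [hG1']; exact hM1
      have hM2' : MLL1 (↑G2' : Multiset Form) := by rw [hG2']; exact hM2
      have hcoe : (↑(Form.and A B :: (l1 ++ l2)) : Multiset Form)
          = Form.and A B ::ₘ (Γ + Δ') := by
        rw [coe_cons, coe_app, hl1, hl2]
      cases hLk1' with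
      | skip _ h1 =>
          refine ⟨G1', .and A B :: (l1 ++ l2), hcoe, hM1', ?_⟩
          exact Link.skip _ (by simpa using link_append h1 (link_nil l2))
      | cons C _ hbfC hexpC h1 =>
          cases hLk2' with
          | skip _ h2 =>
              refine ⟨G2', .and A B :: (l1 ++ l2), hcoe, hM2', ?_⟩
              exact Link.skip _ (by simpa using link_append (link_nil l1) h2)
          | @cons rest2 _ D _ hbfD hexpD h2 =>
              rename_i rest1'
              refine ⟨.and C D :: (rest1' ++ rest2), .and A B :: (l1 ++ l2), hcoe, ?_, ?_⟩
              · have h3 : SC false (C ::ₘ (↑rest1' : Multiset Form)) := by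
                  rw [coe_cons] at hM1'; exact hM1'
                have h4 : SC false (D ::ₘ (↑rest2 : Multiset Form)) := by
                  rw [coe_cons] at hM2'; exact hM2'
                show SC false ↑(Form.and C D :: (rest1' ++ rest2))
                rw [coe_cons, coe_app]
                exact SC.andR false h3 h4
              · exact Link.cons _ _ ⟨hbfC, hbfD⟩ (Exp.andCongr hexpC hexpD)
                  (link_append h1 h2)
  | mix full _ _ ih1 ih2 =>
      obtain ⟨G1, L1, hL1, hM1, hLk1⟩ := ih1
      obtain ⟨G2, L2, hL2, hM2, hLk2⟩ := ih2
      exact ⟨G1 ++ G2, L1 ++ L2, by rw [coe_app, hL1, hL2],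
        SC.mix false hM1 hM2, link_append hLk1 hLk2⟩
  | @exR full Γ A x t _ ih =>
      obtain ⟨G, L, hL, hM, hLk⟩ := ih
      obtain ⟨G', l, hG', hl, hLk'⟩ := headLink hLk hL
      have hM' : MLL1 (↑G' : Multiset Form) := by rw [hG']; exact hM
      cases hLk' with
      | skip _ h1 =>
          exact ⟨G', .ex x A :: l, by rw [coe_cons, hl], hM', Link.skip _ h1⟩
      | @cons rest _ C _ hbf hexp h1 =>
          obtain ⟨C₀, hC₀, hE⟩ := exp_antisubst hexp rfl
          refine ⟨.ex x C₀ :: rest, .ex x A :: l, by rw [coe_cons, hl], ?_, ?_⟩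
          · have : SC false (C₀.subst1 x t ::ₘ ↑rest) := by rw [hC₀]; exact hM'
            exact SC.exR false x t this
          · refine Link.cons _ _ ?_ (Exp.exCongr x hE) h1
            show C₀.BotFree
            exact botFree_subst1.1 (hC₀ ▸ hbf)
  | @allR full Γ A x hfv _ ih =>
      obtain ⟨G, L, hL, hM, hLk⟩ := ih
      obtain ⟨G', l, hG', hl, hLk'⟩ := headLink hLk hL
      have hM' : MLL1 (↑G' : Multiset Form) := by rw [hG']; exact hM
      cases hLk' with
      | skip _ h1 =>
          exact ⟨G', .all x A :: l, by rw [coe_cons, hl], hM', Link.skip _ h1⟩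
      | @cons rest _ C _ hbf hexp h1 =>
          have hfl : ∀ B ∈ l, ¬ B.FreeVar x := by
            intro B hB
            exact hfv B (by rw [← hl]; exact hB)
          refine ⟨.all x C :: rest, .all x A :: l, by rw [coe_cons, hl], ?_, ?_⟩
          · have h3 : SC false (C ::ₘ (↑rest : Multiset Form)) := by
              rw [coe_cons] at hM'; exact hM'
            refine SC.allR false x ?_ h3
            intro B hB
            exact link_freeVar h1 hfl B hB
          · exact Link.cons _ _ hbf (Exp.allCongr x hexp) h1
  | @ctr Γ A _ ih =>
      obtain ⟨G, L, hL, hM, hLk⟩ := ih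
      obtain ⟨G', l, hG', hl, hLk'⟩ := headLink2 hLk hL
      have hM' : MLL1 (↑G' : Multiset Form) := by rw [hG']; exact hM
      cases hLk' with
      | skip _ h1 =>
          cases h1 with
          | skip _ h2 =>
              exact ⟨G', A :: l, by rw [coe_cons, hl], hM', Link.skip _ h2⟩
          | cons D _ hbf hexp h2 =>
              exact ⟨D :: _, A :: l, by rw [coe_cons, hl], hM',
                Link.cons D A hbf hexp h2⟩
      | cons C _ hbfC hexpC h1 =>
          cases h1 with
          | skip _ h2 =>
              exact ⟨C :: _, A :: l, by rw [coe_cons, hl], hM',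
                Link.cons C A hbfC hexpC h2⟩
          | @cons rest _ D _ hbfD hexpD h2 =>
              refine ⟨.or C D :: rest, A :: l, by rw [coe_cons, hl], ?_, ?_⟩
              · have h3 : SC false (C ::ₘ D ::ₘ (↑rest : Multiset Form)) := by
                  rw [coe_cons, coe_cons] at hM'; exact hM'
                exact SC.orR false h3
              · exact Link.cons _ _ ⟨hbfC, hbfD⟩ (Exp.ctr hexpC hexpD) h2
  | @wk Γ A _ ih =>
      obtain ⟨G, L, hL, hM, hLk⟩ := ih
      exact ⟨G, A :: L, by rw [coe_cons, hL], hM, Link.skip _ hLk⟩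

end Decomposition
/-- Every `LK1`-provable sequent decomposes into an
`MLL1`-provable `⊥`-free sequent followed by `{w↓, c↓, ≡}`. -/
theorem LK1_decompose (Γ : List Form) (h : LK1 (↑Γ : Multiset Form)) :
    ∃ Γ' : List Form, (∀ A ∈ Γ', A.BotFree) ∧ MLL1 (↑Γ' : Multiset Form) ∧
      Deriv {RuleName.wDown, RuleName.cDown, RuleName.equivR}
        (Form.bigOr Γ') (Form.bigOr Γ) := by
  obtain ⟨G, L, hL, hM, hLk⟩ := main_decompose h
  refine ⟨G, link_botFree hLk, hM, ?_⟩
  have hGne : G ≠ [] := by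
    intro h0; subst h0; exact sc_ne_zero hM rfl
  have d1 := link_deriv hLk hGne
  have hperm : L.Perm Γ := Multiset.coe_eq_coe.1 hL
  exact d1.trans (deriv_equiv (equiv_bigOr_perm hperm.symm))
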